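/- arXiv:1501.02241 — 2 statements merged into one kernel-verified Lean document; each statement's English description precedes it below -/
import Mathlib

section
/- Fix α1, α2, α3 > 0 and, for 0 < x2 < x1, set R(x1, x2) = 1 - G(x1)^(α1+α3) - G(x2)^(α2+α3) + G(x1)^(α1) * G(x2)^(α2+α3). Then for all 0 < x2 < x1, the conditional failure rate h12(x1|x2) = -(∂²R/∂x1∂x2)/(∂R/∂x2) equals f(x1; α1) / (1 - G(x1)^(α1)), i.e. equals a*b*α1*x1^(b-1)*exp(-a*x1^b*(exp(c*x1^d)-1)+c*x1^d)*(1+(c*d/b)*x1^d-exp(-c*x1^d))*G(x1)^(α1-1) / (1 - G(x1)^(α1)). -/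
open Real

/-- Base CDF of the exponentiated generalized Weibull–Gompertz distribution. -/
noncomputable def G (a b c d x : ℝ) : ℝ :=
  1 - Real.exp (-(a * x ^ b * (Real.exp (c * x ^ d) - 1)))

/-- EGWGD(a,b,c,d,α) probability density. -/
noncomputable def egwgdPdf (a b c d α x : ℝ) : ℝ :=
  a * b * α * x ^ (b - 1) *
    Real.exp (-(a * x ^ b * (Real.exp (c * x ^ d) - 1)) + c * x ^ d) *
    (1 + (c * d / b) * x ^ d - Real.exp (-(c * x ^ d))) *
    (G a b c d x) ^ (α - 1)

/-- Derivative of `G` (for `x > 0`). -/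
noncomputable def Gd (a b c d x : ℝ) : ℝ :=
  Real.exp (-(a * x ^ b * (Real.exp (c * x ^ d) - 1))) *
    (a * (b * x ^ (b - 1)) * (Real.exp (c * x ^ d) - 1) +
      a * (x ^ (b - 1) * x ^ d) * (Real.exp (c * x ^ d) * (c * d)))

lemma rpow_split {x : ℝ} (hx : 0 < x) (b d : ℝ) :
    x ^ (b - 1) * x ^ d = x ^ b * x ^ (d - 1) := by
  rw [← Real.rpow_add hx, ← Real.rpow_add hx]
  ring_nf

lemma hasDerivAt_G (a b c d : ℝ) {x : ℝ} (hx : 0 < x) :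
    HasDerivAt (G a b c d) (Gd a b c d x) x := by
  have hxb : HasDerivAt (fun y : ℝ => y ^ b) (b * x ^ (b - 1)) x :=
    Real.hasDerivAt_rpow_const (Or.inl hx.ne')
  have hxd : HasDerivAt (fun y : ℝ => y ^ d) (d * x ^ (d - 1)) x :=
    Real.hasDerivAt_rpow_const (Or.inl hx.ne')
  have h1 : HasDerivAt (fun y : ℝ => Real.exp (c * y ^ d))
      (Real.exp (c * x ^ d) * (c * (d * x ^ (d - 1)))) x := (hxd.const_mul c).exp
  have h2 : HasDerivAt (fun y : ℝ => a * y ^ b * (Real.exp (c * y ^ d) - 1))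
      ((a * (b * x ^ (b - 1))) * (Real.exp (c * x ^ d) - 1) +
        (a * x ^ b) * (Real.exp (c * x ^ d) * (c * (d * x ^ (d - 1))))) x := by
    have := ((hxb.const_mul a).mul (h1.sub_const 1))
    exact this
  have h3 := (h2.neg.exp).const_sub 1
  have hG : (G a b c d) = fun y : ℝ =>
      1 - Real.exp (-(a * y ^ b * (Real.exp (c * y ^ d) - 1))) := by
    funext y; rfl
  rw [hG]
  refine h3.congr_deriv ?_
  simp only [Pi.neg_apply]
  rw [Gd, rpow_split hx]
  ring

lemma G_pos (a b c d : ℝ) (ha : 0 < a) (hc : 0 < c) {x : ℝ} (hx : 0 < x) :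
    0 < G a b c d x := by
  have hA : 0 < a * x ^ b * (Real.exp (c * x ^ d) - 1) := by
    have h1 : 0 < x ^ b := Real.rpow_pos_of_pos hx b
    have h2 : (1 : ℝ) < Real.exp (c * x ^ d) :=
      Real.one_lt_exp_iff.mpr (mul_pos hc (Real.rpow_pos_of_pos hx d))
    exact mul_pos (mul_pos ha h1) (sub_pos.mpr h2)
  have : Real.exp (-(a * x ^ b * (Real.exp (c * x ^ d) - 1))) < 1 := by
    rw [Real.exp_lt_one_iff]; linarith
  unfold G; linarith

lemma G_lt_one (a b c d : ℝ) {x : ℝ} : G a b c d x < 1 := by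
  unfold G
  have := Real.exp_pos (-(a * x ^ b * (Real.exp (c * x ^ d) - 1)))
  linarith

lemma Gd_pos (a b c d : ℝ) (ha : 0 < a) (hb : 0 < b) (hc : 0 < c) (hd : 0 < d)
    {x : ℝ} (hx : 0 < x) : 0 < Gd a b c d x := by
  unfold Gd
  have h2 : (1 : ℝ) < Real.exp (c * x ^ d) :=
    Real.one_lt_exp_iff.mpr (mul_pos hc (Real.rpow_pos_of_pos hx d))
  have h3 : 0 < x ^ (b - 1) := Real.rpow_pos_of_pos hx _
  have h4 : 0 < x ^ d := Real.rpow_pos_of_pos hx _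
  have h5 : 0 < Real.exp (-(a * x ^ b * (Real.exp (c * x ^ d) - 1))) := Real.exp_pos _
  have h6 : (0:ℝ) < Real.exp (c * x ^ d) := by linarith
  have hx' : 0 < x ^ b := Real.rpow_pos_of_pos hx b
  apply mul_pos h5
  have t1 : 0 < a * (b * x ^ (b - 1)) * (Real.exp (c * x ^ d) - 1) := by
    apply mul_pos (by positivity); linarith
  have t2 : 0 < a * (x ^ (b - 1) * x ^ d) * (Real.exp (c * x ^ d) * (c * d)) := by
    apply mul_pos (by positivity); positivity
  linarith

lemma hasDerivAt_Gpow (a b c d α : ℝ) (ha : 0 < a) (hc : 0 < c) {x : ℝ} (hx : 0 < x) :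
    HasDerivAt (fun y : ℝ => G a b c d y ^ α)
      (α * G a b c d x ^ (α - 1) * Gd a b c d x) x := by
  have h := (hasDerivAt_G a b c d hx).rpow_const
    (p := α) (Or.inl (G_pos a b c d ha hc hx).ne')
  convert h using 1
  ring

lemma pdf_eq (a b c d α : ℝ) (hb : 0 < b) {x : ℝ} (hx : 0 < x) :
    α * G a b c d x ^ (α - 1) * Gd a b c d x = egwgdPdf a b c d α x := by
  unfold Gd egwgdPdf
  rw [Real.exp_add, Real.exp_neg (c * x ^ d)]
  have hE : Real.exp (c * x ^ d) ≠ 0 := Real.exp_ne_zero _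
  field_simp
  ring

theorem stmt_11 (a b c d : ℝ) (ha : 0 < a) (hb : 0 < b) (hc : 0 < c) (hd : 0 < d)
    (α₁ α₂ α₃ : ℝ) (hα₁ : 0 < α₁) (hα₂ : 0 < α₂) (hα₃ : 0 < α₃)
    (R : ℝ → ℝ → ℝ)
    (hR : ∀ y₁ y₂ : ℝ, R y₁ y₂ =
      1 - (G a b c d y₁) ^ (α₁ + α₃) - (G a b c d y₂) ^ (α₂ + α₃) +
        (G a b c d y₁) ^ α₁ * (G a b c d y₂) ^ (α₂ + α₃))
    (x₁ x₂ : ℝ) (hx₂ : 0 < x₂) (hx₂₁ : x₂ < x₁) :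
    -(deriv (fun y₁ : ℝ => deriv (fun y₂ : ℝ => R y₁ y₂) x₂) x₁) /
        (deriv (fun y₂ : ℝ => R x₁ y₂) x₂) =
      egwgdPdf a b c d α₁ x₁ / (1 - (G a b c d x₁) ^ α₁) := by
  have hx₁ : 0 < x₁ := hx₂.trans hx₂₁
  set D : ℝ := (α₂ + α₃) * G a b c d x₂ ^ (α₂ + α₃ - 1) * Gd a b c d x₂ with hD
  have hDpos : 0 < D := by
    have h1 := G_pos a b c d ha hc hx₂
    have h2 := Gd_pos a b c d ha hb hc hd hx₂
    have h3 : 0 < G a b c d x₂ ^ (α₂ + α₃ - 1) := Real.rpow_pos_of_pos h1 _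
    rw [hD]; positivity
  -- inner derivative
  have inner : ∀ y₁ : ℝ, deriv (fun y₂ : ℝ => R y₁ y₂) x₂ =
      (G a b c d y₁ ^ α₁ - 1) * D := by
    intro y₁
    have key : (fun y₂ : ℝ => R y₁ y₂) = fun y₂ : ℝ =>
        (1 - G a b c d y₁ ^ (α₁ + α₃)) +
          (G a b c d y₁ ^ α₁ - 1) * G a b c d y₂ ^ (α₂ + α₃) := by
      funext y; rw [hR]; ring
    rw [key]
    have h := ((hasDerivAt_Gpow a b c d (α₂ + α₃) ha hc hx₂).const_mul
        (G a b c d y₁ ^ α₁ - 1)).const_add (1 - G a b c d y₁ ^ (α₁ + α₃))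
    rw [h.deriv, hD]
    try ring
  -- outer derivative
  have outer : deriv (fun y₁ : ℝ => deriv (fun y₂ : ℝ => R y₁ y₂) x₂) x₁ =
      (α₁ * G a b c d x₁ ^ (α₁ - 1) * Gd a b c d x₁) * D := by
    have key : (fun y₁ : ℝ => deriv (fun y₂ : ℝ => R y₁ y₂) x₂) =
        fun y₁ : ℝ => (G a b c d y₁ ^ α₁ - 1) * D := by
      funext y₁; exact inner y₁
    rw [key]
    have h := ((hasDerivAt_Gpow a b c d α₁ ha hc hx₁).sub_const 1).mul_const D
    rw [h.deriv]
  rw [outer, inner x₁]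
  have hGlt : G a b c d x₁ ^ α₁ < 1 :=
    Real.rpow_lt_one (G_pos a b c d ha hc hx₁).le (G_lt_one a b c d) hα₁
  have hne : G a b c d x₁ ^ α₁ - 1 ≠ 0 := by linarith
  have hne2 : (1 : ℝ) - G a b c d x₁ ^ α₁ ≠ 0 := by linarith
  rw [← pdf_eq a b c d α₁ hb hx₁]
  field_simp
  ring
end

section
/- Fix α1, α2, α3 > 0 and, for 0 < x1 < x2, set R(x1, x2) = 1 - G(x1)^(α1+α3) - G(x2)^(α2+α3) + G(x1)^(α1+α3) * G(x2)^(α2). Then R(x1, x2) > 0 and the second component of the hazard gradient satisfies -∂/∂x2 [ln R(x1, x2)] = γ2 * ( (α2+α3) * G(x2)^(α3) - α2 * G(x1)^(α1+α3) ) * G(x2)^(α2-1) / R(x1, x2), where γ2 = a*b*x2^(b-1)*exp(-a*x2^b*(exp(c*x2^d)-1)+c*x2^d)*(1+(c*d/b)*x2^d-exp(-c*x2^d)). -/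
open Real

lemma G_bounds (a b c d x : ℝ) (ha : 0 < a) (hb : 0 < b) (hc : 0 < c) (hd : 0 < d)
    (hx : 0 < x) : 0 < G a b c d x ∧ G a b c d x < 1 := by
  have hxd : 0 < c * x ^ d := mul_pos hc (Real.rpow_pos_of_pos hx d)
  have h1 : 1 < Real.exp (c * x ^ d) := by
    simpa using Real.exp_lt_exp.mpr hxd
  have ht : 0 < a * x ^ b * (Real.exp (c * x ^ d) - 1) :=
    mul_pos (mul_pos ha (Real.rpow_pos_of_pos hx b)) (by linarith)
  have h2 : Real.exp (-(a * x ^ b * (Real.exp (c * x ^ d) - 1))) < 1 := by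
    simpa using Real.exp_lt_exp.mpr (neg_lt_zero.mpr ht)
  have h3 : 0 < Real.exp (-(a * x ^ b * (Real.exp (c * x ^ d) - 1))) := Real.exp_pos _
  constructor <;> [skip; skip] <;> unfold G <;> linarith

lemma hasDerivAt_G_s13 (a b c d x : ℝ) (hx : 0 < x) (hb : 0 < b) (hd : 0 < d) :
    HasDerivAt (fun y => G a b c d y)
      ((a * (b * x ^ (b - 1)) * (Real.exp (c * x ^ d) - 1)
        + a * x ^ b * (Real.exp (c * x ^ d) * (c * (d * x ^ (d - 1)))))
        * Real.exp (-(a * x ^ b * (Real.exp (c * x ^ d) - 1)))) x := by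
  have hxb : HasDerivAt (fun y : ℝ => y ^ b) (b * x ^ (b - 1)) x :=
    Real.hasDerivAt_rpow_const (Or.inl hx.ne')
  have hxd : HasDerivAt (fun y : ℝ => y ^ d) (d * x ^ (d - 1)) x :=
    Real.hasDerivAt_rpow_const (Or.inl hx.ne')
  have hcxd : HasDerivAt (fun y : ℝ => c * y ^ d) (c * (d * x ^ (d - 1))) x := hxd.const_mul c
  have hexp : HasDerivAt (fun y : ℝ => Real.exp (c * y ^ d) - 1)
      (Real.exp (c * x ^ d) * (c * (d * x ^ (d - 1)))) x := (hcxd.exp).sub_const 1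
  have haxb : HasDerivAt (fun y : ℝ => a * y ^ b) (a * (b * x ^ (b - 1))) x := hxb.const_mul a
  have hh : HasDerivAt (fun y : ℝ => a * y ^ b * (Real.exp (c * y ^ d) - 1))
      (a * (b * x ^ (b - 1)) * (Real.exp (c * x ^ d) - 1)
        + a * x ^ b * (Real.exp (c * x ^ d) * (c * (d * x ^ (d - 1))))) x := haxb.mul hexp
  have := ((hh.neg).exp).const_sub 1
  refine HasDerivAt.congr_deriv this ?_
  simp only [Pi.neg_apply]
  ring

theorem stmt_13 (a b c d : ℝ) (ha : 0 < a) (hb : 0 < b) (hc : 0 < c) (hd : 0 < d)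
    (α₁ α₂ α₃ : ℝ) (hα₁ : 0 < α₁) (hα₂ : 0 < α₂) (hα₃ : 0 < α₃)
    (R : ℝ → ℝ → ℝ)
    (hR : ∀ y₁ y₂ : ℝ, R y₁ y₂ =
      1 - (G a b c d y₁) ^ (α₁ + α₃) - (G a b c d y₂) ^ (α₂ + α₃) +
        (G a b c d y₁) ^ (α₁ + α₃) * (G a b c d y₂) ^ α₂)
    (x₁ x₂ : ℝ) (hx₁ : 0 < x₁) (hx₁₂ : x₁ < x₂) :
    0 < R x₁ x₂ ∧
      -(deriv (fun y₂ : ℝ => Real.log (R x₁ y₂)) x₂) =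
        (a * b * x₂ ^ (b - 1) *
            Real.exp (-(a * x₂ ^ b * (Real.exp (c * x₂ ^ d) - 1)) + c * x₂ ^ d) *
            (1 + (c * d / b) * x₂ ^ d - Real.exp (-(c * x₂ ^ d)))) *
          ((α₂ + α₃) * (G a b c d x₂) ^ α₃ - α₂ * (G a b c d x₁) ^ (α₁ + α₃)) *
          (G a b c d x₂) ^ (α₂ - 1) / R x₁ x₂ := by
  have hx₂ : 0 < x₂ := hx₁.trans hx₁₂
  obtain ⟨hu0, hu1⟩ := G_bounds a b c d x₁ ha hb hc hd hx₁
  obtain ⟨hv0, hv1⟩ := G_bounds a b c d x₂ ha hb hc hd hx₂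
  set u := G a b c d x₁ with hu
  set v := G a b c d x₂ with hv
  -- positivity of R
  have huA : u ^ (α₁ + α₃) < 1 := Real.rpow_lt_one hu0.le hu1 (by linarith)
  have huA0 : 0 < u ^ (α₁ + α₃) := Real.rpow_pos_of_pos hu0 _
  have hvα : v ^ α₂ < 1 := Real.rpow_lt_one hv0.le hv1 hα₂
  have hvα0 : 0 < v ^ α₂ := Real.rpow_pos_of_pos hv0 _
  have hmono : v ^ (α₂ + α₃) ≤ v ^ α₂ :=
    Real.rpow_le_rpow_of_exponent_ge hv0 hv1.le (by linarith)
  have hRpos : 0 < R x₁ x₂ := by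
    rw [hR]
    nlinarith [mul_pos (sub_pos.mpr huA) (sub_pos.mpr hvα)]
  refine ⟨hRpos, ?_⟩
  -- derivative of G at x₂
  set T := c * x₂ ^ d with hT
  set H := a * x₂ ^ b * (Real.exp T - 1) with hH
  set g' := (a * (b * x₂ ^ (b - 1)) * (Real.exp T - 1)
        + a * x₂ ^ b * (Real.exp T * (c * (d * x₂ ^ (d - 1)))))
        * Real.exp (-H) with hg'
  have hG' : HasDerivAt (fun y => G a b c d y) g' x₂ := hasDerivAt_G_s13 a b c d x₂ hx₂ hb hd
  -- derivative of R x₁ · at x₂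
  have hf : HasDerivAt (fun y => R x₁ y)
      (-(g' * (α₂ + α₃) * v ^ (α₂ + α₃ - 1)) + u ^ (α₁ + α₃) * (g' * α₂ * v ^ (α₂ - 1))) x₂ := by
    have h1 : HasDerivAt (fun y => (G a b c d y) ^ (α₂ + α₃))
        (g' * (α₂ + α₃) * v ^ (α₂ + α₃ - 1)) x₂ := hG'.rpow_const (Or.inl hv0.ne')
    have h2 : HasDerivAt (fun y => (G a b c d y) ^ α₂) (g' * α₂ * v ^ (α₂ - 1)) x₂ :=
      hG'.rpow_const (Or.inl hv0.ne')
    have h3 := ((h1.const_sub (1 - u ^ (α₁ + α₃))).add (h2.const_mul (u ^ (α₁ + α₃))))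
    have heq : (fun y => R x₁ y) = fun y =>
        (1 - u ^ (α₁ + α₃) - (G a b c d y) ^ (α₂ + α₃)) + u ^ (α₁ + α₃) * (G a b c d y) ^ α₂ := by
      funext y; rw [hR]
    rw [heq]
    exact h3
  have hlog : HasDerivAt (fun y => Real.log (R x₁ y))
      ((-(g' * (α₂ + α₃) * v ^ (α₂ + α₃ - 1)) + u ^ (α₁ + α₃) * (g' * α₂ * v ^ (α₂ - 1)))
        / R x₁ x₂) x₂ := hf.log hRpos.ne'
  rw [hlog.deriv]
  rw [← neg_div]
  congr 1
  -- algebraic identity for numerators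
  have hvsplit : v ^ (α₂ + α₃ - 1) = v ^ α₃ * v ^ (α₂ - 1) := by
    rw [← Real.rpow_add hv0]; congr 1; ring
  have hexpadd : Real.exp (-H + T) = Real.exp (-H) * Real.exp T := Real.exp_add _ _
  have hTT : Real.exp T * Real.exp (-T) = 1 := by
    rw [← Real.exp_add]; simp
  have hxx : x₂ ^ (b - 1) * x₂ ^ d = x₂ ^ b * x₂ ^ (d - 1) := by
    rw [← Real.rpow_add hx₂, ← Real.rpow_add hx₂]; congr 1; ring
  have hbdiv : b * (c * d / b) = c * d := by field_simp
  -- γ₂ = g'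
  have hγ : a * b * x₂ ^ (b - 1) * Real.exp (-H + T) *
      (1 + (c * d / b) * x₂ ^ d - Real.exp (-T)) = g' := by
    rw [hexpadd, hg']
    have expand : a * b * x₂ ^ (b - 1) * (Real.exp (-H) * Real.exp T) *
        (1 + c * d / b * x₂ ^ d - Real.exp (-T))
        = a * b * x₂ ^ (b - 1) * Real.exp (-H) * Real.exp T
          + a * (b * (c * d / b)) * (x₂ ^ (b - 1) * x₂ ^ d) * Real.exp (-H) * Real.exp T
          - a * b * x₂ ^ (b - 1) * Real.exp (-H) * (Real.exp T * Real.exp (-T)) := by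
      ring
    rw [expand, hbdiv, hTT, hxx]
    ring
  rw [← hγ, hvsplit]
  ring
end
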